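/- arXiv:1401.4911 — 7 statements merged into one kernel-verified Lean document; each statement's English description precedes it below -/
import Mathlib

section
/- Let f : ℝ → ℝ be convex. Then for all x₁, x₂, y₁, y₂ ∈ ℝ, f(x₁ - x₂) + f(y₁ - y₂) ≥ f(max x₁ y₁ - max x₂ y₂) + f(min x₁ y₁ - min x₂ y₂). -/
lemma key_convex (f : ℝ → ℝ) (hf : ConvexOn ℝ Set.univ f) (a b u v : ℝ)
    (hsum : u + v = a + b) (h1 : a ≤ u) (h2 : u ≤ b) : f u + f v ≤ f a + f b := by
  rcases eq_or_lt_of_le (h1.trans h2) with h | h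
  · have hu : u = a := le_antisymm (h ▸ h2) h1
    have hv : v = b := by linarith
    simp [hu, hv]
  · set t := (u - a) / (b - a) with ht
    have hba : (0:ℝ) < b - a := by linarith
    have ht0 : 0 ≤ t := div_nonneg (by linarith) hba.le
    have ht1 : t ≤ 1 := by
      rw [ht, div_le_one hba]; linarith
    have hu : u = (1 - t) * a + t * b := by
      have htb : t * (b - a) = u - a := by rw [ht]; exact div_mul_cancel₀ _ hba.ne'
      linear_combination (-1 : ℝ) * htb
    have hv : v = t * a + (1 - t) * b := by
      have : v = a + b - u := by linarith
      rw [this, hu]; ring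
    have c1 := hf.2 (Set.mem_univ a) (Set.mem_univ b)
      (show (0:ℝ) ≤ 1 - t by linarith) ht0 (by ring)
    have c2 := hf.2 (Set.mem_univ a) (Set.mem_univ b) ht0
      (show (0:ℝ) ≤ 1 - t by linarith) (by ring)
    rw [smul_eq_mul, smul_eq_mul, smul_eq_mul, smul_eq_mul] at c1 c2
    rw [hu, hv]
    calc f ((1 - t) * a + t * b) + f (t * a + (1 - t) * b)
        ≤ ((1 - t) * f a + t * f b) + (t * f a + (1 - t) * f b) := add_le_add c1 c2
      _ = f a + f b := by ring

theorem submodular_of_convex_diff (f : ℝ → ℝ) (hf : ConvexOn ℝ Set.univ f)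
    (x₁ x₂ y₁ y₂ : ℝ) :
    f (max x₁ y₁ - max x₂ y₂) + f (min x₁ y₁ - min x₂ y₂) ≤ f (x₁ - x₂) + f (y₁ - y₂) := by
  set a := x₁ - x₂ with ha
  set b := y₁ - y₂ with hb
  set u := max x₁ y₁ - max x₂ y₂ with hu
  set v := min x₁ y₁ - min x₂ y₂ with hv
  have hsum : u + v = min a b + max a b := by
    rw [min_add_max]
    have h1 : max x₁ y₁ + min x₁ y₁ = x₁ + y₁ := max_add_min _ _
    have h2 : max x₂ y₂ + min x₂ y₂ = x₂ + y₂ := max_add_min _ _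
    simp only [hu, hv, ha, hb]; linarith
  have hlo : min a b ≤ u := by
    rcases le_total x₂ y₂ with h | h
    · have h2 : max x₂ y₂ = y₂ := max_eq_right h
      have h3 := le_max_right x₁ y₁
      calc min a b ≤ b := min_le_right _ _
        _ ≤ u := by rw [hu, hb, h2]; linarith
    · have h2 : max x₂ y₂ = x₂ := max_eq_left h
      have h3 := le_max_left x₁ y₁
      calc min a b ≤ a := min_le_left _ _
        _ ≤ u := by rw [hu, ha, h2]; linarith
  have hhi : u ≤ max a b := by
    rcases le_total x₁ y₁ with h | h
    · have h2 : max x₁ y₁ = y₁ := max_eq_right h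
      have h3 := le_max_right x₂ y₂
      calc u ≤ b := by rw [hu, hb, h2]; linarith
        _ ≤ max a b := le_max_right _ _
    · have h2 : max x₁ y₁ = x₁ := max_eq_left h
      have h3 := le_max_left x₂ y₂
      calc u ≤ a := by rw [hu, ha, h2]; linarith
        _ ≤ max a b := le_max_left _ _
  have := key_convex f hf (min a b) (max a b) u v hsum hlo hhi
  rcases le_total a b with h | h
  · rwa [min_eq_left h, max_eq_right h] at this
  · rw [min_eq_right h, max_eq_left h] at this; linarith
end

section
/- The functional E(u) = ∬_{ℝᵈ×ℝᵈ} |u(x)-u(y)|² / |x-y|^{d+2s} dx dy is submodular with respect to the pointwise lattice structure: for all measurable u, v : ℝᵈ → ℝ, E(u ⊓ v) + E(u ⊔ v) ≤ E(u) + E(v), where u ⊓ v and u ⊔ v denote the pointwise minimum and maximum. -/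
open MeasureTheory
open scoped ENNReal

/-- The fractional (Gagliardo) energy functional with exponent 2 and parameter `s`. -/
noncomputable def fracEnergy (d : ℕ) (s : ℝ) (u : EuclideanSpace ℝ (Fin d) → ℝ) : ℝ≥0∞ :=
  ∫⁻ p : EuclideanSpace ℝ (Fin d) × EuclideanSpace ℝ (Fin d),
    ENNReal.ofReal (|u p.1 - u p.2| ^ 2 / dist p.1 p.2 ^ ((d : ℝ) + 2 * s))

lemma minmax_sq_key (a b c e : ℝ) :
    |min a c - min b e| ^ 2 + |max a c - max b e| ^ 2 ≤ |a - b| ^ 2 + |c - e| ^ 2 := by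
  simp only [sq_abs]
  rcases le_total a c with h1 | h1 <;> rcases le_total b e with h2 | h2 <;>
    simp only [min_eq_left, min_eq_right, max_eq_left, max_eq_right, h1, h2] <;> nlinarith

lemma energyIntegrand_measurable (d : ℕ) (s : ℝ) (u : EuclideanSpace ℝ (Fin d) → ℝ)
    (hu : Measurable u) :
    Measurable (fun p : EuclideanSpace ℝ (Fin d) × EuclideanSpace ℝ (Fin d) =>
      ENNReal.ofReal (|u p.1 - u p.2| ^ 2 / dist p.1 p.2 ^ ((d : ℝ) + 2 * s))) := by
  apply ENNReal.measurable_ofReal.comp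
  apply Measurable.div
  · exact (((hu.comp measurable_fst).sub (hu.comp measurable_snd)).abs.pow measurable_const)
  · exact (measurable_fst.dist measurable_snd).pow measurable_const

theorem fracEnergy_submodular (d : ℕ) (hd : 1 ≤ d) (s : ℝ) (hs0 : 0 < s) (hs1 : s < 1)
    (u v : EuclideanSpace ℝ (Fin d) → ℝ) (hu : Measurable u) (hv : Measurable v) :
    fracEnergy d s (fun x => min (u x) (v x)) + fracEnergy d s (fun x => max (u x) (v x)) ≤
      fracEnergy d s u + fracEnergy d s v := by
  unfold fracEnergy
  rw [← lintegral_add_left (energyIntegrand_measurable d s _ (hu.min hv)),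
      ← lintegral_add_left (energyIntegrand_measurable d s u hu)]
  apply lintegral_mono
  intro p
  set w := dist p.1 p.2 ^ ((d : ℝ) + 2 * s) with hw
  have hwnn : 0 ≤ w := Real.rpow_nonneg dist_nonneg _
  have nn : ∀ x : ℝ, 0 ≤ |x| ^ 2 / w := fun x => div_nonneg (by positivity) hwnn
  simp only
  rw [← ENNReal.ofReal_add (nn _) (nn _), ← ENNReal.ofReal_add (nn _) (nn _),
      ← add_div, ← add_div]
  apply ENNReal.ofReal_le_ofReal
  exact div_le_div_of_nonneg_right (minmax_sq_key (u p.1) (u p.2) (v p.1) (v p.2)) hwnn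
end

section
/- Let B be a topological vector lattice and E : B → ℝ ∪ {+∞} a convex, submodular functional (i.e. E(x ⊓ y) + E(x ⊔ y) ≤ E(x) + E(y) for all x, y). Then the subdifferential of E is T-monotone: for all x, y ∈ B, x* ∈ ∂E(x), y* ∈ ∂E(y), one has ⟨x* - y*, (x - y) ⊔ 0⟩ ≥ 0. -/
open scoped Topology

/-- The subdifferential of an `EReal`-valued functional, as a set of continuous
linear functionals.  It is empty outside of the domain of `E`. -/
def ESubdiff {B : Type*} [AddCommGroup B] [Module ℝ B] [TopologicalSpace B]
    (E : B → EReal) (x : B) : Set (B →L[ℝ] ℝ) :=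
  {xs | E x ≠ ⊤ ∧ ∀ z : B, ((xs (z - x) : ℝ) : EReal) + E x ≤ E z}

theorem subdiff_Tmonotone_of_submodular
    {B : Type*} [AddCommGroup B] [Module ℝ B] [Lattice B]
    [TopologicalSpace B] [IsTopologicalAddGroup B] [ContinuousSMul ℝ B]
    [T2Space B] [LocallyConvexSpace ℝ B]
    [CovariantClass B B (· + ·) (· ≤ ·)]
    (hsmul : ∀ (c : ℝ) (x : B), 0 ≤ c → 0 ≤ x → 0 ≤ c • x)
    (E : B → EReal) (hbot : ∀ x, E x ≠ ⊥)
    (hconv : ∀ (x y : B) (t : ℝ), 0 ≤ t → t ≤ 1 →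
      E (t • x + (1 - t) • y) ≤ (t : EReal) * E x + ((1 - t) : EReal) * E y)
    (hsub : ∀ x y : B, E (x ⊓ y) + E (x ⊔ y) ≤ E x + E y)
    (x y : B) (xs ys : B →L[ℝ] ℝ) (hx : xs ∈ ESubdiff E x) (hy : ys ∈ ESubdiff E y) :
    0 ≤ (xs - ys) ((x - y) ⊔ 0) := by
  haveI : CovariantClass B B (Function.swap (· + ·)) (· ≤ ·) :=
    ⟨fun c a b h => by simpa [add_comm] using add_le_add_left h c⟩
  set p := (x - y) ⊔ 0 with hp
  have h1 : x ⊓ y - x = -p := by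
    have : x ⊓ y - x = (x - x) ⊓ (y - x) := by
      rw [sub_eq_add_neg, sub_eq_add_neg, sub_eq_add_neg, inf_add]
    rw [this, sub_self, hp, neg_sup, neg_zero, neg_sub, inf_comm]
  have h2 : x ⊔ y - y = p := by
    have : x ⊔ y - y = (x - y) ⊔ (y - y) := by
      rw [sub_eq_add_neg, sub_eq_add_neg, sub_eq_add_neg, sup_add]
    rw [this, sub_self]
  obtain ⟨r, hr⟩ : ∃ r : ℝ, E x = (r : EReal) := by
    lift E x to ℝ using ⟨hx.1, hbot x⟩ with r; exact ⟨r, rfl⟩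
  obtain ⟨s, hs⟩ : ∃ s : ℝ, E y = (s : EReal) := by
    lift E y to ℝ using ⟨hy.1, hbot y⟩ with s; exact ⟨s, rfl⟩
  have hA := hx.2 (x ⊓ y)
  have hB := hy.2 (x ⊔ y)
  rw [h1] at hA
  rw [h2] at hB
  have hsum : ((xs (-p) : ℝ) : EReal) + E x + (((ys p : ℝ) : EReal) + E y)
      ≤ E x + E y := le_trans (add_le_add hA hB) (hsub x y)
  rw [hr, hs] at hsum
  have key : xs (-p) + r + (ys p + s) ≤ r + s := by
    exact_mod_cast hsum
  have : ys p ≤ xs p := by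
    have := key
    rw [map_neg] at this
    linarith
  simpa using this
end

section
/- Let B be a topological vector lattice and E : B → ℝ a convex functional whose subdifferential is everywhere nonempty and T-monotone (⟨x* - y*, (x - y) ⊔ 0⟩ ≥ 0 for all x* ∈ ∂E(x), y* ∈ ∂E(y)). Then E is submodular: E(x ⊓ y) + E(x ⊔ y) ≤ E(x) + E(y) for all x, y ∈ B. -/
/-- The subdifferential of a real-valued functional, as a set of continuous
linear functionals. -/
def RSubdiff {B : Type*} [AddCommGroup B] [Module ℝ B] [TopologicalSpace B]
    (E : B → ℝ) (x : B) : Set (B →L[ℝ] ℝ) :=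
  {xs | ∀ z : B, xs (z - x) ≤ E z - E x}

private lemma oneD_aux (g h ψ χ : ℝ → ℝ)
    (hg : ∀ s u : ℝ, g s + ψ s * (u - s) ≤ g u)
    (hh : ∀ t u : ℝ, h t + χ t * (u - t) ≤ h u)
    (key : ∀ s t : ℝ, s < t → ψ s ≤ χ t) :
    g 1 - g 0 ≤ h 1 - h 0 := by
  have hχmono : ∀ t u : ℝ, t ≤ u → χ t ≤ χ u := by
    intro t u htu
    rcases htu.eq_or_lt with rfl | hlt
    · exact le_rfl
    have h1 := hh t u
    have h2 := hh u t
    nlinarith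
  have hC : 0 ≤ 2 * (χ 2 - ψ (-1)) := by
    have := key (-1) 2 (by norm_num)
    linarith
  have main : ∀ n : ℕ, 0 < n → g 1 - g 0 ≤ h 1 - h 0 + 2 * (χ 2 - ψ (-1)) / n := by
    intro n hn
    have hnR : (0:ℝ) < n := by exact_mod_cast hn
    set δ : ℝ := 1 / n with hδ
    have hδpos : 0 < δ := by positivity
    have hδ1 : δ ≤ 1 := by
      rw [hδ, div_le_one hnR]
      exact_mod_cast hn
    have hnδ : (n:ℝ) * δ = 1 := by rw [hδ, mul_one_div, div_self hnR.ne']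
    -- telescoping sums
    have tg : ∑ k ∈ Finset.range n, (g ((k+1 : ℕ) * δ) - g (k * δ)) = g 1 - g 0 := by
      rw [Finset.sum_range_sub (fun k : ℕ => g (k * δ))]
      norm_num [hnδ]
    have th : ∑ k ∈ Finset.range n, (h ((k+1 : ℕ) * δ) - h (k * δ)) = h 1 - h 0 := by
      rw [Finset.sum_range_sub (fun k : ℕ => h (k * δ))]
      norm_num [hnδ]
    set b : ℕ → ℝ := fun k => χ ((k : ℝ) * δ) * δ with hb
    -- upper bound for g-increments (subgradient at right endpoints)
    have bg : g 1 - g 0 ≤ ∑ k ∈ Finset.range n, ψ (((k:ℝ)+1) * δ) * δ := by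
      rw [← tg]
      apply Finset.sum_le_sum
      intro k _
      have e : ((k:ℝ) * δ - ((k:ℝ)+1) * δ) = -δ := by ring
      have h1 := hg (((k:ℝ)+1) * δ) ((k:ℝ) * δ)
      rw [e, mul_neg] at h1
      push_cast
      linarith [h1]
    -- lower bound for h-increments (subgradient at left endpoints)
    have bh : ∑ k ∈ Finset.range n, b k ≤ h 1 - h 0 := by
      rw [← th]
      apply Finset.sum_le_sum
      intro k _
      have e : ((((k:ℝ))+1) * δ - (k:ℝ) * δ) = δ := by ring
      have h1 := hh ((k:ℝ) * δ) (((k:ℝ)+1) * δ)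
      rw [e] at h1
      simp only [hb]
      push_cast
      linarith [h1]
    -- shift comparison: ψ((k+1)δ) ≤ χ((k+2)δ)
    have bmid : ∑ k ∈ Finset.range n, ψ (((k:ℝ)+1) * δ) * δ ≤
        ∑ k ∈ Finset.range n, b (k+2) := by
      apply Finset.sum_le_sum
      intro k _
      have hk : (((k:ℝ)+1) * δ) < (((k:ℝ)+2) * δ) := by nlinarith
      have := mul_le_mul_of_nonneg_right (key _ _ hk) hδpos.le
      simp only [hb]
      push_cast
      linarith [this]
    -- double shift identity
    have hshift1 : ∑ k ∈ Finset.range n, b (k+1) = (∑ k ∈ Finset.range n, b k) + b n - b 0 := by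
      have h1 := Finset.sum_range_succ' b n
      have h2 := Finset.sum_range_succ b n
      linarith [h1, h2]
    have hshift2 : ∑ k ∈ Finset.range n, b (k+2) =
        (∑ k ∈ Finset.range n, b k) + b n + b (n+1) - b 0 - b 1 := by
      have h1 := Finset.sum_range_succ' (fun k => b (k+1)) n
      have h2 := Finset.sum_range_succ (fun k => b (k+1)) n
      linarith [h1, h2, hshift1]
    -- tail bound
    have htail : b n + b (n+1) - b 0 - b 1 ≤ 2 * (χ 2 - ψ (-1)) * δ := by
      have e1 : χ ((n:ℝ) * δ) ≤ χ 2 := hχmono _ _ (by nlinarith)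
      have e2 : χ (((n:ℝ)+1) * δ) ≤ χ 2 := hχmono _ _ (by nlinarith)
      have e3 : ψ (-1) ≤ χ ((0:ℝ) * δ) := key _ _ (by nlinarith)
      have e4 : ψ (-1) ≤ χ ((1:ℝ) * δ) := key _ _ (by nlinarith)
      simp only [hb]
      push_cast
      nlinarith [mul_le_mul_of_nonneg_right e1 hδpos.le,
        mul_le_mul_of_nonneg_right e2 hδpos.le,
        mul_le_mul_of_nonneg_right e3 hδpos.le,
        mul_le_mul_of_nonneg_right e4 hδpos.le]
    have : 2 * (χ 2 - ψ (-1)) * δ = 2 * (χ 2 - ψ (-1)) / n := by rw [hδ]; ring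
    calc g 1 - g 0 ≤ ∑ k ∈ Finset.range n, ψ (((k:ℝ)+1) * δ) * δ := bg
      _ ≤ ∑ k ∈ Finset.range n, b (k+2) := bmid
      _ = (∑ k ∈ Finset.range n, b k) + b n + b (n+1) - b 0 - b 1 := hshift2
      _ ≤ (h 1 - h 0) + 2 * (χ 2 - ψ (-1)) / n := by linarith [bh, htail]
  by_contra hcon
  push_neg at hcon
  set ε : ℝ := g 1 - g 0 - (h 1 - h 0) with hε
  have hεpos : 0 < ε := by simp only [hε]; linarith
  obtain ⟨n, hn⟩ := exists_nat_gt (2 * (χ 2 - ψ (-1)) / ε)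
  have hnpos : 0 < n := by
    by_contra hle
    push_neg at hle
    interval_cases n
    · simp at hn
      nlinarith [div_nonneg hC hεpos.le]
  have h1 := main n hnpos
  have hnR : (0:ℝ) < n := by exact_mod_cast hnpos
  have : 2 * (χ 2 - ψ (-1)) / n < ε := by
    rw [div_lt_iff₀ hnR]
    rw [div_lt_iff₀ hεpos] at hn
    linarith [hn]
  linarith

theorem submodular_of_subdiff_Tmonotone
    {B : Type*} [AddCommGroup B] [Module ℝ B] [Lattice B]
    [TopologicalSpace B] [IsTopologicalAddGroup B] [ContinuousSMul ℝ B]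
    [T2Space B] [LocallyConvexSpace ℝ B]
    [CovariantClass B B (· + ·) (· ≤ ·)]
    (hsmul : ∀ (c : ℝ) (x : B), 0 ≤ c → 0 ≤ x → 0 ≤ c • x)
    (E : B → ℝ) (hconv : ConvexOn ℝ Set.univ E)
    (hne : ∀ x : B, (RSubdiff E x).Nonempty)
    (hmono : ∀ (x y : B) (xs ys : B →L[ℝ] ℝ), xs ∈ RSubdiff E x → ys ∈ RSubdiff E y →
      0 ≤ (xs - ys) ((x - y) ⊔ 0)) :
    ∀ x y : B, E (x ⊓ y) + E (x ⊔ y) ≤ E x + E y := by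
  -- scalar multiplication is monotone
  have hsmono : ∀ (c : ℝ) (u v : B), 0 ≤ c → u ≤ v → c • u ≤ c • v := by
    intro c u v hc huv
    have h0 : (0:B) ≤ c • (v - u) := hsmul c (v - u) hc (sub_nonneg.mpr huv)
    rw [smul_sub] at h0
    exact sub_nonneg.mp h0
  intro x y
  set w : B := (x - y) ⊔ 0 with hw
  set w' : B := (y - x) ⊔ 0 with hw'
  have hw0 : (0:B) ≤ w := le_sup_right
  have hw'0 : (0:B) ≤ w' := le_sup_right
  have hnegw' : (x - y) ⊓ 0 = -w' := by
    have h1 : -((y - x) ⊔ 0) = -(y - x) ⊓ -0 := neg_sup _ _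
    simp only [neg_sub, neg_zero] at h1
    rw [hw', ← h1]
  have hnegw : (y - x) ⊓ 0 = -w := by
    have h1 : -((x - y) ⊔ 0) = -(x - y) ⊓ -0 := neg_sup _ _
    simp only [neg_sub, neg_zero] at h1
    rw [hw, ← h1]
  have hxy : x - y = w - w' := by
    have h1 : (x - y) ⊓ 0 + ((x - y) ⊔ 0) = (x - y) + 0 := inf_add_sup _ _
    rw [hnegw', add_zero, ← hw] at h1
    rw [← h1]
    abel
  have hinf : w ⊓ w' = 0 := by
    have h3 : w = (x - y) + w' := by
      rw [hxy]; abel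
    have h4 : w ⊓ w' = ((x - y) + w') ⊓ (0 + w') := by
      rw [← h3, zero_add]
    rw [h4, ← inf_add, hnegw']
    abel
  have hjoin : x ⊔ y = y + w := by
    rw [hw]
    have h1 := add_sup (x - y) 0 y
    simp only [add_zero] at h1
    have e : y + (x - y) = x := by abel
    rw [h1, e]
  have hmeet : x ⊓ y = x - w := by
    have h3 : x + ((y - x) ⊓ 0) = x ⊓ y := by
      have h1 := add_inf (y - x) 0 x
      simp only [add_zero] at h1
      have e : x + (y - x) = y := by abel
      rw [h1, e, inf_comm]
    rw [← h3, hnegw]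
    abel
  -- scaled disjointness
  have hdisj : ∀ c : ℝ, 0 ≤ c → (c • w) ⊓ w' = 0 := by
    intro c hc
    have hk : (0:ℝ) < c + 1 := by linarith
    have k1 : c • w ≤ (c+1) • w := by
      have e : (c+1) • w - c • w = w := by
        rw [← sub_smul]; norm_num
      have h0 : (0:B) ≤ (c+1) • w - c • w := by rw [e]; exact hw0
      exact sub_nonneg.mp h0
    have k2 : w' ≤ (c+1) • w' := by
      have e : (c+1) • w' - (1:ℝ) • w' = c • w' := by
        rw [← sub_smul]; norm_num
      have h0 : (0:B) ≤ (c+1) • w' - (1:ℝ) • w' := by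
        rw [e]; exact hsmul c w' hc hw'0
      have := sub_nonneg.mp h0
      rwa [one_smul] at this
    have hle1 : (c • w) ⊓ w' ≤ ((c+1) • w) ⊓ ((c+1) • w') := inf_le_inf k1 k2
    have r1 : (c+1)⁻¹ • (((c+1) • w) ⊓ ((c+1) • w')) ≤ w ⊓ w' := by
      apply le_inf
      · have := hsmono (c+1)⁻¹ _ _ (by positivity) (inf_le_left (a := (c+1) • w) (b := (c+1) • w'))
        rwa [inv_smul_smul₀ hk.ne'] at this
      · have := hsmono (c+1)⁻¹ _ _ (by positivity) (inf_le_right (a := (c+1) • w) (b := (c+1) • w'))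
        rwa [inv_smul_smul₀ hk.ne'] at this
    have r2 : ((c+1) • w) ⊓ ((c+1) • w') ≤ (c+1) • (w ⊓ w') := by
      have := hsmono (c+1) _ _ hk.le r1
      rwa [smul_inv_smul₀ hk.ne'] at this
    rw [hinf, smul_zero] at r2
    have lower : (0:B) ≤ (c • w) ⊓ w' := le_inf (hsmul c w hc hw0) hw'0
    exact le_antisymm (hle1.trans r2) lower
  -- the key positive-part computation
  have keypos : ∀ c : ℝ, 0 ≤ c → (c • w - w') ⊔ 0 = c • w := by
    intro c hc
    have h1 : (c • w) ⊔ w' - w' = (c • w - w') ⊔ 0 := by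
      rw [sup_sub, sub_self]
    have h2 : (c • w) ⊔ w' = c • w + w' := by
      have h3 := inf_add_sup (c • w) w'
      rw [hdisj c hc, zero_add] at h3
      exact h3
    rw [← h1, h2]
    abel
  -- subgradient selection
  choose q hq using hne
  set G : ℝ → ℝ := fun s => E (y + s • w) with hG
  set H : ℝ → ℝ := fun t => E (x - (1 - t) • w) with hHdef
  set ψ : ℝ → ℝ := fun s => (q (y + s • w)) w with hψ
  set χ : ℝ → ℝ := fun t => (q (x - (1 - t) • w)) w with hχ
  have hg : ∀ s u : ℝ, G s + ψ s * (u - s) ≤ G u := by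
    intro s u
    have H1 := hq (y + s • w) (y + u • w)
    have e : (y + u • w) - (y + s • w) = (u - s) • w := by module
    rw [e, map_smul, smul_eq_mul] at H1
    simp only [hG, hψ]
    nlinarith [H1]
  have hh : ∀ t u : ℝ, H t + χ t * (u - t) ≤ H u := by
    intro t u
    have H1 := hq (x - (1 - t) • w) (x - (1 - u) • w)
    have e : (x - (1 - u) • w) - (x - (1 - t) • w) = (u - t) • w := by module
    rw [e, map_smul, smul_eq_mul] at H1
    simp only [hHdef, hχ]
    nlinarith [H1]
  have key : ∀ s t : ℝ, s < t → ψ s ≤ χ t := by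
    intro s t hst
    have H1 := hmono (x - (1 - t) • w) (y + s • w) _ _ (hq _) (hq _)
    have e : (x - (1 - t) • w) - (y + s • w) = (t - s) • w - w' := by
      have e1 : (x - (1 - t) • w) - (y + s • w) = (x - y) - ((1 - t) + s) • w := by
        module
      rw [e1, hxy]
      module
    rw [e, keypos (t - s) (by linarith)] at H1
    rw [ContinuousLinearMap.sub_apply, map_smul, map_smul, smul_eq_mul, smul_eq_mul] at H1
    simp only [hψ, hχ]
    nlinarith [H1]
  have final := oneD_aux G H ψ χ hg hh key
  have eG1 : G 1 = E (x ⊔ y) := by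
    simp only [hG, one_smul, ← hjoin]
  have eG0 : G 0 = E y := by
    simp only [hG, zero_smul, add_zero]
  have eH1 : H 1 = E x := by
    simp only [hHdef]; norm_num
  have eH0 : H 0 = E (x ⊓ y) := by
    simp only [hHdef, hmeet]; norm_num
  rw [eG1, eG0, eH1, eH0] at final
  linarith
end

section
/- Abstract Lewy–Stampacchia inequality (lower bound): Let B be a topological vector lattice, E : B → ℝ ∪ {+∞} convex and submodular, φ ≺ ψ in B, and ū a minimizer of E on the order interval [φ, ψ]. Assume E is continuous at some point of dom E ∩ [φ, ψ]. Then for every w* ∈ ∂E(φ) that can be written as a difference of elements of the dual cone P*, there exists x* ∈ ∂E(ū), also a difference of elements of P*, with x* ≺ w* ⊔ 0 (i.e. (w* ⊔ 0) − x* ∈ P*). -/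
/-- A continuous linear functional is a difference of elements of the dual cone `P*`. -/
def IsPosDiff {B : Type*} [AddCommGroup B] [Module ℝ B] [TopologicalSpace B] [Lattice B]
    (w : B →L[ℝ] ℝ) : Prop :=
  ∃ w₁ w₂ : B →L[ℝ] ℝ, (∀ z : B, 0 ≤ z → 0 ≤ w₁ z) ∧ (∀ z : B, 0 ≤ z → 0 ≤ w₂ z) ∧ w = w₁ - w₂

namespace LSAux

variable {B : Type*} [AddCommGroup B] [Module ℝ B] [Lattice B]
  [CovariantClass B B (· + ·) (· ≤ ·)]

lemma smul_mono (hsmul : ∀ (c : ℝ) (x : B), 0 ≤ c → 0 ≤ x → 0 ≤ c • x)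
    {c : ℝ} (hc : 0 ≤ c) {x y : B} (h : x ≤ y) : c • x ≤ c • y := by
  have h2 := hsmul c (y - x) hc (sub_nonneg.mpr h)
  rw [smul_sub] at h2
  exact sub_nonneg.mp h2

lemma sub_inf' (a b c : B) : a - (b ⊓ c) = (a - b) ⊔ (a - c) := by
  rw [sub_eq_add_neg, neg_inf, add_sup]; simp [sub_eq_add_neg]

/-- convexity of the positive part -/
lemma posPart_combo (hsmul : ∀ (c : ℝ) (x : B), 0 ≤ c → 0 ≤ x → 0 ≤ c • x)
    {a b : ℝ} (ha : 0 ≤ a) (hb : 0 ≤ b) (x y : B) :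
    (a • x + b • y) ⊔ 0 ≤ a • (x ⊔ 0) + b • (y ⊔ 0) := by
  refine sup_le ?_ ?_
  · exact add_le_add (smul_mono hsmul ha le_sup_left) (smul_mono hsmul hb le_sup_left)
  · exact add_nonneg (hsmul a _ ha le_sup_right) (hsmul b _ hb le_sup_right)

/-- Riesz decomposition in a lattice ordered group -/
lemma riesz {z x y : B} (hz : 0 ≤ z) (hzxy : z ≤ x + y) (hx : 0 ≤ x) (hy : 0 ≤ y) :
    ∃ z₁ z₂ : B, 0 ≤ z₁ ∧ z₁ ≤ x ∧ 0 ≤ z₂ ∧ z₂ ≤ y ∧ z = z₁ + z₂ := by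
  refine ⟨z ⊓ x, z - z ⊓ x, le_inf hz hx, inf_le_right, sub_nonneg.mpr inf_le_left, ?_, by abel⟩
  rw [sub_inf']
  refine sup_le (by simpa using hy) ?_
  have : z - x ≤ (x + y) - x := sub_le_sub_right hzxy x
  simpa using this

section S

variable [TopologicalSpace B] (ws w₁ : B →L[ℝ] ℝ)

/-- The value of `w* ⊔ 0` on the positive cone. -/
noncomputable def S (v : B) : ℝ := sSup {r : ℝ | ∃ z : B, 0 ≤ z ∧ z ≤ v ∧ ws z = r}

variable (hb : ∀ z : B, 0 ≤ z → ws z ≤ w₁ z) (hw₁ : ∀ z : B, 0 ≤ z → 0 ≤ w₁ z)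

include hb hw₁

lemma S_bdd {v : B} (hv : 0 ≤ v) :
    BddAbove {r : ℝ | ∃ z : B, 0 ≤ z ∧ z ≤ v ∧ ws z = r} := by
  refine ⟨w₁ v, ?_⟩
  rintro r ⟨z, hz0, hzv, rfl⟩
  have h1 : w₁ z ≤ w₁ v := by
    have := hw₁ (v - z) (sub_nonneg.mpr hzv)
    rw [map_sub] at this; linarith
  exact (hb z hz0).trans h1

lemma ws_le_S {v z : B} (hv : 0 ≤ v) (hz0 : 0 ≤ z) (hzv : z ≤ v) : ws z ≤ S ws v :=
  le_csSup (S_bdd ws w₁ hb hw₁ hv) ⟨z, hz0, hzv, rfl⟩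

lemma S_nonneg {v : B} (hv : 0 ≤ v) : 0 ≤ S ws v := by
  have := ws_le_S ws w₁ hb hw₁ hv (le_refl (0 : B)) hv
  simpa using this

lemma S_le_w₁ {v : B} (hv : 0 ≤ v) : S ws v ≤ w₁ v := by
  refine csSup_le ⟨0, 0, le_refl _, hv, map_zero ws⟩ ?_
  rintro r ⟨z, hz0, hzv, rfl⟩
  have h1 : w₁ z ≤ w₁ v := by
    have := hw₁ (v - z) (sub_nonneg.mpr hzv)
    rw [map_sub] at this; linarith
  exact (hb z hz0).trans h1

lemma S_mono {v v' : B} (hv : 0 ≤ v) (hvv' : v ≤ v') : S ws v ≤ S ws v' := by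
  refine csSup_le ⟨0, 0, le_refl _, hv, map_zero ws⟩ ?_
  rintro r ⟨z, hz0, hzv, rfl⟩
  exact ws_le_S ws w₁ hb hw₁ (hv.trans hvv') hz0 (hzv.trans hvv')

lemma S_combo (hsmul : ∀ (c : ℝ) (x : B), 0 ≤ c → 0 ≤ x → 0 ≤ c • x)
    {x y : B} (hx : 0 ≤ x) (hy : 0 ≤ y) {a b : ℝ} (ha : 0 ≤ a) (hb' : 0 ≤ b) :
    S ws (a • x + b • y) ≤ a * S ws x + b * S ws y := by
  have hax : 0 ≤ a • x := hsmul a x ha hx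
  have hby : 0 ≤ b • y := hsmul b y hb' hy
  refine csSup_le ⟨0, 0, le_refl _, add_nonneg hax hby, map_zero ws⟩ ?_
  rintro r ⟨z, hz0, hzv, rfl⟩
  obtain ⟨z₁, z₂, hz₁0, hz₁, hz₂0, hz₂, rfl⟩ := riesz hz0 hzv hax hby
  have key : ∀ (c : ℝ) (w u : B), 0 ≤ c → 0 ≤ w → 0 ≤ u → w ≤ c • u → ws w ≤ c * S ws u := by
    intro c w u hc hw hu hwu
    rcases eq_or_lt_of_le hc with hc0 | hcpos
    · have : w = 0 := le_antisymm (by simpa [← hc0] using hwu) hw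
      simp [this, ← hc0]
    · have h1 : c⁻¹ • w ≤ u := by
        have := smul_mono hsmul (le_of_lt (inv_pos.mpr hcpos)) hwu
        rwa [smul_smul, inv_mul_cancel₀ (ne_of_gt hcpos), one_smul] at this
      have h2 : 0 ≤ c⁻¹ • w := hsmul _ _ (le_of_lt (inv_pos.mpr hcpos)) hw
      have h3 : ws (c⁻¹ • w) ≤ S ws u := ws_le_S ws w₁ hb hw₁ hu h2 h1
      have h4 : ws w = c * ws (c⁻¹ • w) := by
        rw [map_smul, smul_eq_mul, ← mul_assoc, mul_inv_cancel₀ (ne_of_gt hcpos), one_mul]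
      rw [h4]
      exact mul_le_mul_of_nonneg_left h3 hc
  have e1 := key a z₁ x ha hz₁0 hx hz₁
  have e2 := key b z₂ y hb' hz₂0 hy hz₂
  rw [map_add]
  linarith

end S

end LSAux

open LSAux in
theorem abstract_lewy_stampacchia_lower
    {B : Type*} [AddCommGroup B] [Module ℝ B] [Lattice B]
    [TopologicalSpace B] [IsTopologicalAddGroup B] [ContinuousSMul ℝ B]
    [T2Space B] [LocallyConvexSpace ℝ B]
    [CovariantClass B B (· + ·) (· ≤ ·)]
    (hsmul : ∀ (c : ℝ) (x : B), 0 ≤ c → 0 ≤ x → 0 ≤ c • x)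
    (E : B → EReal) (hbot : ∀ x, E x ≠ ⊥)
    (hconv : ∀ (x y : B) (t : ℝ), 0 ≤ t → t ≤ 1 →
      E (t • x + (1 - t) • y) ≤ (t : EReal) * E x + ((1 - t) : EReal) * E y)
    (hsub : ∀ x y : B, E (x ⊓ y) + E (x ⊔ y) ≤ E x + E y)
    (φ ψ : B) (hφψ : φ ≤ ψ)
    (ubar : B) (hubar : φ ≤ ubar ∧ ubar ≤ ψ ∧ ∀ u : B, φ ≤ u → u ≤ ψ → E ubar ≤ E u)
    (hcont : ∃ u : B, φ ≤ u ∧ u ≤ ψ ∧ E u ≠ ⊤ ∧ ContinuousAt E u)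
    (ws : B →L[ℝ] ℝ) (hws : ws ∈ ESubdiff E φ) (hwsd : IsPosDiff ws) :
    ∃ xs : B →L[ℝ] ℝ, xs ∈ ESubdiff E ubar ∧ IsPosDiff xs ∧
      ∀ v : B, 0 ≤ v → xs v ≤ sSup {r : ℝ | ∃ z : B, 0 ≤ z ∧ z ≤ v ∧ ws z = r} := by
  obtain ⟨hφu, huψ, hmin⟩ := hubar
  obtain ⟨u₀, hφ0, h0ψ, hE0top, hE0cont⟩ := hcont
  obtain ⟨w₁, w₂, hw₁, hw₂, hwd⟩ := hwsd
  obtain ⟨hEφtop, hwsub⟩ := hws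
  have hb : ∀ z : B, 0 ≤ z → ws z ≤ w₁ z := by
    intro z hz
    rw [hwd]
    have := hw₂ z hz
    simp only [ContinuousLinearMap.sub_apply]
    linarith
  -- E ubar is finite
  have hEu_le0 : E ubar ≤ E u₀ := hmin u₀ hφ0 h0ψ
  have hEubar_top : E ubar ≠ ⊤ := fun h => hE0top (top_le_iff.mp (h ▸ hEu_le0))
  set eu : ℝ := (E ubar).toReal with heu_def
  have heu : E ubar = ((eu : ℝ) : EReal) := (EReal.coe_toReal hEubar_top (hbot _)).symm
  set e₀ : ℝ := (E u₀).toReal with he₀_def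
  have he₀ : E u₀ = ((e₀ : ℝ) : EReal) := (EReal.coe_toReal hE0top (hbot _)).symm
  set p : ℝ := (E φ).toReal with hp_def
  have hp : E φ = ((p : ℝ) : EReal) := (EReal.coe_toReal hEφtop (hbot _)).symm
  -- KEY LEMMA: for every u ≤ ψ, E ubar ≤ E u + S((φ-u)⁺)
  have keyC : ∀ u : B, u ≤ ψ → E ubar ≤ E u + ((S ws ((φ - u) ⊔ 0) : ℝ) : EReal) := by
    intro u huu
    by_cases hEu : E u = ⊤
    · rw [hEu, EReal.top_add_coe]; exact le_top
    set r : ℝ := (E u).toReal with hr_def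
    have hr : E u = ((r : ℝ) : EReal) := (EReal.coe_toReal hEu (hbot _)).symm
    have h1 := hsub u φ
    -- finiteness of E (u ⊓ φ) and E (u ⊔ φ)
    have hfin : E (u ⊓ φ) ≠ ⊤ ∧ E (u ⊔ φ) ≠ ⊤ := by
      constructor
      · intro h
        rw [h, EReal.top_add_of_ne_bot (hbot _), hr, hp, ← EReal.coe_add, top_le_iff] at h1
        exact EReal.coe_ne_top _ h1
      · intro h
        rw [h, EReal.add_top_of_ne_bot (hbot _), hr, hp, ← EReal.coe_add, top_le_iff] at h1
        exact EReal.coe_ne_top _ h1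
    set ea : ℝ := (E (u ⊓ φ)).toReal with hea_def
    have hea : E (u ⊓ φ) = ((ea : ℝ) : EReal) := (EReal.coe_toReal hfin.1 (hbot _)).symm
    set eb : ℝ := (E (u ⊔ φ)).toReal with heb_def
    have heb : E (u ⊔ φ) = ((eb : ℝ) : EReal) := (EReal.coe_toReal hfin.2 (hbot _)).symm
    have h1' : ea + eb ≤ r + p := by
      rw [hea, heb, hr, hp, ← EReal.coe_add, ← EReal.coe_add, EReal.coe_le_coe_iff] at h1
      exact h1
    have h2 := hwsub (u ⊓ φ)
    have h2' : ws (u ⊓ φ - φ) + p ≤ ea := by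
      rw [hea, hp, ← EReal.coe_add, EReal.coe_le_coe_iff] at h2
      exact h2
    have h3 : eu ≤ eb := by
      have := hmin (u ⊔ φ) le_sup_right (sup_le huu hφψ)
      rw [heu, heb, EReal.coe_le_coe_iff] at this
      exact this
    -- φ - u ⊓ φ = (φ - u) ⊔ 0
    have hid : φ - u ⊓ φ = (φ - u) ⊔ 0 := by
      rw [sub_inf']; simp
    have h4 : ws (φ - u ⊓ φ) ≤ S ws ((φ - u) ⊔ 0) := by
      rw [hid]
      exact ws_le_S ws w₁ hb hw₁ le_sup_right (by rw [← hid]; exact sub_nonneg.mpr inf_le_right)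
        (le_refl _)
    have h5 : ws (u ⊓ φ - φ) = -ws (φ - u ⊓ φ) := by
      rw [← map_neg]; congr 1; abel
    rw [heu, hr, ← EReal.coe_add, EReal.coe_le_coe_iff]
    rw [h5] at h2'
    linarith
  -- the two convex sets to separate
  set C₁ : Set (B × ℝ) := {q | E (ubar + q.1) < E ubar + ((q.2 : ℝ) : EReal)} with hC₁def
  set C₂ : Set (B × ℝ) :=
    {q | ubar + q.1 ≤ ψ ∧ q.2 ≤ -(S ws ((φ - (ubar + q.1)) ⊔ 0))} with hC₂def
  have hdisj : Disjoint C₁ C₂ := by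
    rw [Set.disjoint_left]
    rintro ⟨h, rr⟩ h1 h2
    simp only [hC₁def, hC₂def, Set.mem_setOf_eq] at h1 h2
    obtain ⟨hψ2, hr2⟩ := h2
    have hk := keyC (ubar + h) hψ2
    have hEutop : E (ubar + h) ≠ ⊤ := by
      intro ht
      rw [ht, heu, ← EReal.coe_add] at h1
      exact not_top_lt h1
    set x : ℝ := (E (ubar + h)).toReal with hx_def
    have hx : E (ubar + h) = ((x : ℝ) : EReal) := (EReal.coe_toReal hEutop (hbot _)).symm
    rw [hx, heu, ← EReal.coe_add, EReal.coe_lt_coe_iff] at h1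
    rw [heu, hx, ← EReal.coe_add, EReal.coe_le_coe_iff] at hk
    have hS0 : 0 ≤ S ws ((φ - (ubar + h)) ⊔ 0) := S_nonneg ws w₁ hb hw₁ le_sup_right
    linarith
  -- convexity of C₁
  have hconvC₁ : Convex ℝ C₁ := by
    rintro ⟨h1, r1⟩ hm1 ⟨h2, r2⟩ hm2 a b ha hb' hab
    simp only [hC₁def, Set.mem_setOf_eq, Prod.smul_mk, Prod.mk_add_mk] at hm1 hm2 ⊢
    have hE1top : E (ubar + h1) ≠ ⊤ := by
      intro ht
      rw [ht, heu, ← EReal.coe_add] at hm1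
      exact not_top_lt hm1
    have hE2top : E (ubar + h2) ≠ ⊤ := by
      intro ht
      rw [ht, heu, ← EReal.coe_add] at hm2
      exact not_top_lt hm2
    set x : ℝ := (E (ubar + h1)).toReal with hxd
    have hx : E (ubar + h1) = ((x : ℝ) : EReal) := (EReal.coe_toReal hE1top (hbot _)).symm
    set y : ℝ := (E (ubar + h2)).toReal with hyd
    have hy : E (ubar + h2) = ((y : ℝ) : EReal) := (EReal.coe_toReal hE2top (hbot _)).symm
    rw [hx, heu, ← EReal.coe_add, EReal.coe_lt_coe_iff] at hm1
    rw [hy, heu, ← EReal.coe_add, EReal.coe_lt_coe_iff] at hm2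
    have hbeq : b = 1 - a := by linarith
    have hub : a • ubar + b • ubar = ubar := by rw [← add_smul, hab, one_smul]
    have halg : ubar + (a • h1 + b • h2) = a • (ubar + h1) + (1 - a) • (ubar + h2) := by
      rw [← hbeq, smul_add, smul_add]
      conv_lhs => rw [← hub]
      abel
    have hc := hconv (ubar + h1) (ubar + h2) a ha (by linarith)
    rw [← halg, hx, hy] at hc
    have hcombo : ((a : ℝ) : EReal) * ((x : ℝ) : EReal)
          + (1 - ((a : ℝ) : EReal)) * ((y : ℝ) : EReal)
        = (((a * x + (1 - a) * y : ℝ)) : EReal) := by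
      rw [show (1 - ((a : ℝ) : EReal)) = (((1 - a : ℝ)) : EReal) by
            rw [EReal.coe_sub, EReal.coe_one],
          ← EReal.coe_mul, ← EReal.coe_mul, ← EReal.coe_add]
    rw [hcombo] at hc
    have hstrict : a * x + (1 - a) * y < eu + (a • r1 + b • r2) := by
      simp only [smul_eq_mul]
      rcases eq_or_lt_of_le ha with h0 | hpos
      · rw [← h0] at hbeq ⊢
        simp only [zero_mul, zero_add, sub_zero, one_mul]
        rw [hbeq]; simpa using hm2
      · have e1 : a * x < a * (eu + r1) := by
          exact (mul_lt_mul_iff_right₀ hpos).mpr hm1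
        have e2 : (1 - a) * y ≤ (1 - a) * (eu + r2) := by
          apply mul_le_mul_of_nonneg_left (le_of_lt hm2) (by linarith)
        have e3 : a * (eu + r1) + (1 - a) * (eu + r2) = eu + (a * r1 + (1 - a) * r2) := by
          ring
        rw [hbeq]
        linarith
    calc E (ubar + (a • h1 + b • h2)) ≤ (((a * x + (1 - a) * y : ℝ)) : EReal) := hc
      _ < ((eu + (a • r1 + b • r2) : ℝ) : EReal) := EReal.coe_lt_coe_iff.mpr hstrict
      _ = ((eu : ℝ) : EReal) + (((a • r1 + b • r2 : ℝ)) : EReal) := EReal.coe_add _ _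
      _ = E ubar + _ := by rw [heu]
  -- convexity of C₂
  have hconvC₂ : Convex ℝ C₂ := by
    rintro ⟨h1, r1⟩ hm1 ⟨h2, r2⟩ hm2 a b ha hb' hab
    simp only [hC₂def, Set.mem_setOf_eq, Prod.smul_mk, Prod.mk_add_mk] at hm1 hm2 ⊢
    obtain ⟨hψ1, hr1⟩ := hm1
    obtain ⟨hψ2, hr2⟩ := hm2
    have hub : a • ubar + b • ubar = ubar := by rw [← add_smul, hab, one_smul]
    have hφeq : a • φ + b • φ = φ := by rw [← add_smul, hab, one_smul]
    have halg : ubar + (a • h1 + b • h2) = a • (ubar + h1) + b • (ubar + h2) := by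
      rw [smul_add, smul_add]
      conv_lhs => rw [← hub]
      abel
    constructor
    · rw [halg]
      calc a • (ubar + h1) + b • (ubar + h2) ≤ a • ψ + b • ψ :=
            add_le_add (smul_mono hsmul ha hψ1) (smul_mono hsmul hb' hψ2)
        _ = ψ := by rw [← add_smul, hab, one_smul]
    · have halg2 : φ - (ubar + (a • h1 + b • h2))
          = a • (φ - (ubar + h1)) + b • (φ - (ubar + h2)) := by
        rw [halg, smul_sub, smul_sub]
        conv_lhs => rw [← hφeq]
        abel
      have hpp : (φ - (ubar + (a • h1 + b • h2))) ⊔ 0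
          ≤ a • ((φ - (ubar + h1)) ⊔ 0) + b • ((φ - (ubar + h2)) ⊔ 0) := by
        rw [halg2]
        exact posPart_combo hsmul ha hb' _ _
      have hS1 : S ws ((φ - (ubar + (a • h1 + b • h2))) ⊔ 0)
          ≤ a * S ws ((φ - (ubar + h1)) ⊔ 0) + b * S ws ((φ - (ubar + h2)) ⊔ 0) := by
        calc S ws ((φ - (ubar + (a • h1 + b • h2))) ⊔ 0)
            ≤ S ws (a • ((φ - (ubar + h1)) ⊔ 0) + b • ((φ - (ubar + h2)) ⊔ 0)) :=
              S_mono ws w₁ hb hw₁ le_sup_right hpp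
          _ ≤ _ := S_combo ws w₁ hb hw₁ hsmul le_sup_right le_sup_right ha hb'
      have e1 : a • r1 ≤ a * (-(S ws ((φ - (ubar + h1)) ⊔ 0))) :=
        mul_le_mul_of_nonneg_left hr1 ha
      have e2 : b • r2 ≤ b * (-(S ws ((φ - (ubar + h2)) ⊔ 0))) :=
        mul_le_mul_of_nonneg_left hr2 hb'
      simp only [smul_eq_mul] at e1 e2 ⊢
      linarith
  -- an interior point of C₁
  set h₀ : B := u₀ - ubar with hh₀def
  have hu₀eq : ubar + h₀ = u₀ := by rw [hh₀def]; abel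
  set M : ℝ := e₀ + 1 - eu with hMdef
  set V : Set B := interior (E ⁻¹' Set.Iio (((e₀ + 1 : ℝ)) : EReal)) with hVdef
  have hu₀V : u₀ ∈ V := by
    rw [hVdef, mem_interior_iff_mem_nhds]
    apply hE0cont.preimage_mem_nhds
    apply isOpen_Iio.mem_nhds
    rw [he₀]
    exact Set.mem_Iio.mpr (EReal.coe_lt_coe_iff.mpr (by norm_num))
  set O : Set (B × ℝ) := {q | ubar + q.1 ∈ V ∧ M < q.2} with hOdef
  have hOopen : IsOpen O := by
    have h1 : IsOpen ((fun q : B × ℝ => ubar + q.1) ⁻¹' V) :=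
      (isOpen_interior.preimage (continuous_const.add continuous_fst))
    have h2 : IsOpen ((Prod.snd : B × ℝ → ℝ) ⁻¹' Set.Ioi M) :=
      isOpen_Ioi.preimage continuous_snd
    exact h1.inter h2
  have hOC₁ : O ⊆ C₁ := by
    rintro ⟨h, rr⟩ ⟨hV, hM⟩
    simp only [hC₁def, Set.mem_setOf_eq]
    have h1' : ubar + h ∈ E ⁻¹' Set.Iio (((e₀ + 1 : ℝ)) : EReal) := interior_subset hV
    have h1 : E (ubar + h) < (((e₀ + 1 : ℝ)) : EReal) := h1'
    calc E (ubar + h) < (((e₀ + 1 : ℝ)) : EReal) := h1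
      _ ≤ ((eu + rr : ℝ) : EReal) := by
          rw [EReal.coe_le_coe_iff]; rw [hMdef] at hM; linarith
      _ = E ubar + ((rr : ℝ) : EReal) := by rw [heu, EReal.coe_add]
  have hw₀int : ((h₀, M + 1) : B × ℝ) ∈ interior C₁ := by
    apply interior_maximal hOC₁ hOopen
    exact ⟨by rw [hu₀eq]; exact hu₀V, by norm_num⟩
  -- separation
  obtain ⟨f, c, hfs, hft⟩ := geometric_hahn_banach_open (hconvC₁.interior) isOpen_interior
    hconvC₂ (Set.disjoint_of_subset_left interior_subset hdisj)
  -- extend strict inequality on interior to weak inequality on C₁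
  have hfC₁ : ∀ q ∈ C₁, f q ≤ c := by
    intro q hq
    have hseg : ∀ t : ℝ, t ∈ Set.Ioo (0 : ℝ) 1 →
        f (t • ((h₀, M + 1) : B × ℝ) + (1 - t) • q) < c := by
      intro t ht
      apply hfs
      exact hconvC₁.combo_interior_closure_mem_interior hw₀int (subset_closure hq) ht.1
        (by linarith [ht.2]) (by ring)
    have hval : ∀ t : ℝ, t ∈ Set.Ioo (0 : ℝ) 1 →
        t * f (h₀, M + 1) + (1 - t) * f q < c := by
      intro t ht
      have := hseg t ht
      rwa [map_add, map_smul, map_smul, smul_eq_mul, smul_eq_mul] at this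
    have hts : Filter.Tendsto (fun t : ℝ => t * f (h₀, M + 1) + (1 - t) * f q)
        (nhdsWithin 0 (Set.Ioi 0)) (nhds (f q)) := by
      have hcont2 : Continuous (fun t : ℝ => t * f (h₀, M + 1) + (1 - t) * f q) :=
        (continuous_id.mul continuous_const).add
          ((continuous_const.sub continuous_id).mul continuous_const)
      have := hcont2.tendsto 0
      simp only [zero_mul, sub_zero, one_mul, zero_add] at this
      exact this.mono_left nhdsWithin_le_nhds
    refine le_of_tendsto hts ?_
    filter_upwards [Ioo_mem_nhdsGT_of_mem (Set.mem_Ico.mpr ⟨le_rfl, one_pos⟩)] with t ht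
    exact le_of_lt (hval t ht)
  -- decompose f
  set g : B →L[ℝ] ℝ := f.comp (ContinuousLinearMap.inl ℝ B ℝ) with hgdef
  set s : ℝ := f ((0 : B), (1 : ℝ)) with hsdef
  have hfeq : ∀ (h : B) (rr : ℝ), f (h, rr) = g h + rr * s := by
    intro h rr
    have : ((h, rr) : B × ℝ) = ((h, 0) : B × ℝ) + rr • (((0 : B), (1 : ℝ)) : B × ℝ) := by
      ext <;> simp
    rw [this, map_add, map_smul, smul_eq_mul]
    rfl
  have hC₁le : ∀ (h : B) (rr : ℝ), E (ubar + h) < E ubar + ((rr : ℝ) : EReal) →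
      g h + rr * s ≤ c := by
    intro h rr hlt
    rw [← hfeq]; exact hfC₁ (h, rr) hlt
  have hC₂ge : ∀ (h : B) (rr : ℝ), ubar + h ≤ ψ →
      rr ≤ -(S ws ((φ - (ubar + h)) ⊔ 0)) → c ≤ g h + rr * s := by
    intro h rr h1 h2
    rw [← hfeq]; exact hft (h, rr) ⟨h1, h2⟩
  -- s < 0
  have hslt : s < 0 := by
    by_contra hs
    push_neg at hs
    set r₀ : ℝ := -(S ws ((φ - u₀) ⊔ 0)) with hr₀def
    have hge : c ≤ g h₀ + r₀ * s := by
      apply hC₂ge h₀ r₀ (by rw [hu₀eq]; exact h0ψ)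
      rw [hu₀eq]
    set rbig : ℝ := max (M + 1) r₀ with hrbigdef
    have hlt : g h₀ + rbig * s < c := by
      have : ((h₀, rbig) : B × ℝ) ∈ interior C₁ := by
        apply interior_maximal hOC₁ hOopen
        refine ⟨by rw [hu₀eq]; exact hu₀V, ?_⟩
        calc M < M + 1 := by norm_num
          _ ≤ rbig := le_max_left _ _
      have := hfs _ this
      rwa [hfeq] at this
    have : r₀ * s ≤ rbig * s := mul_le_mul_of_nonneg_right (le_max_right _ _) hs
    linarith
  -- c = 0
  have hc0 : c = 0 := by
    have hcle : c ≤ 0 := by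
      have h1 : (φ - ubar) ⊔ 0 = 0 := sup_eq_right.mpr (sub_nonpos.mpr hφu)
      have h2 : S ws ((φ - ubar) ⊔ 0) ≤ 0 := by
        rw [h1]
        have := S_le_w₁ ws w₁ hb hw₁ (le_refl (0 : B))
        simpa using this
      have := hC₂ge 0 0 (by rw [add_zero]; exact huψ)
        (by rw [add_zero]; linarith)
      simpa using this
    have hcge : 0 ≤ c := by
      by_contra hc
      push_neg at hc
      have hr : (0 : ℝ) < c / (2 * s) := by
        apply div_pos_of_neg_of_neg hc
        linarith
      have hmem : g 0 + (c / (2 * s)) * s ≤ c := by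
        apply hC₁le
        rw [add_zero, heu, ← EReal.coe_add, EReal.coe_lt_coe_iff]
        linarith
      have hs0 : s ≠ 0 := ne_of_lt hslt
      have h5 : c / (2 * s) * s = c / 2 := by
        field_simp
      rw [map_zero, zero_add, h5] at hmem
      linarith
    linarith
  set σ : ℝ := -s with hσdef
  have hσpos : 0 < σ := by rw [hσdef]; linarith
  set xs : B →L[ℝ] ℝ := σ⁻¹ • g with hxsdef
  have hxsapp : ∀ h : B, xs h = σ⁻¹ * g h := by
    intro h
    rw [hxsdef]
    simp [ContinuousLinearMap.smul_apply, smul_eq_mul]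
  -- property (b): xs v ≤ S v for v ≥ 0
  have hxsS : ∀ v : B, 0 ≤ v → xs v ≤ S ws v := by
    intro v hv
    set S₀ : ℝ := S ws ((φ - (ubar + -v)) ⊔ 0) with hS₀def
    have h1 : c ≤ g (-v) + (-S₀) * s := by
      apply hC₂ge (-v) (-S₀) ?_ (le_refl _)
      calc ubar + -v ≤ ubar + 0 := add_le_add_right (neg_nonpos.mpr hv) ubar
        _ = ubar := add_zero _
        _ ≤ ψ := huψ
    rw [hc0, map_neg] at h1
    have h2 : g v ≤ σ * S₀ := by rw [hσdef]; linarith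
    have h3 : xs v ≤ S₀ := by
      rw [hxsapp]
      rw [← mul_le_mul_iff_right₀ hσpos, ← mul_assoc, mul_inv_cancel₀ (ne_of_gt hσpos), one_mul]
      exact h2
    have h4 : S₀ ≤ S ws v := by
      rw [hS₀def]
      apply S_mono ws w₁ hb hw₁ le_sup_right
      refine sup_le ?_ hv
      have : φ - (ubar + -v) = (φ - ubar) + v := by abel
      rw [this]
      calc (φ - ubar) + v ≤ 0 + v := add_le_add_left (sub_nonpos.mpr hφu) v
        _ = v := zero_add v
    linarith
  refine ⟨xs, ⟨hEubar_top, ?_⟩, ?_, ?_⟩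
  · -- subdifferential property
    intro z
    by_cases hEz : E z = ⊤
    · rw [hEz]; exact le_top
    set z' : ℝ := (E z).toReal with hz'def
    have hz' : E z = ((z' : ℝ) : EReal) := (EReal.coe_toReal hEz (hbot _)).symm
    have hkey : xs (z - ubar) ≤ z' - eu := by
      apply le_of_forall_pos_le_add
      intro ε hε
      have hmem : g (z - ubar) + (z' - eu + ε) * s ≤ c := by
        apply hC₁le
        have : ubar + (z - ubar) = z := by abel
        rw [this, hz', heu, ← EReal.coe_add, EReal.coe_lt_coe_iff]
        linarith
      rw [hc0] at hmem
      have h2 : g (z - ubar) ≤ σ * (z' - eu + ε) := by rw [hσdef]; linarith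
      rw [hxsapp]
      rw [← mul_le_mul_iff_right₀ hσpos, ← mul_assoc, mul_inv_cancel₀ (ne_of_gt hσpos), one_mul]
      linarith
    rw [hz', heu, ← EReal.coe_add, EReal.coe_le_coe_iff]
    linarith
  · -- IsPosDiff
    refine ⟨w₁, w₁ - xs, hw₁, ?_, (sub_sub_cancel w₁ xs).symm⟩
    intro z hz
    rw [ContinuousLinearMap.sub_apply]
    have h1 := hxsS z hz
    have h2 := S_le_w₁ ws w₁ hb hw₁ hz
    linarith
  · -- the Lewy-Stampacchia bound
    intro v hv
    exact hxsS v hv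
end

section
/- Abstract Lewy–Stampacchia inequality (upper bound): Let B be a topological vector lattice, E : B → ℝ ∪ {+∞} convex and submodular, φ ≺ ψ in B, and ū a minimizer of E on [φ, ψ]. Assume E is continuous at some point of dom E ∩ [φ, ψ]. Then for every w* ∈ ∂E(ψ) expressible as a difference of elements of the dual cone P*, there exists x* ∈ ∂E(ū), also such a difference, with w* ⊓ 0 ≺ x*. -/
section Aux

variable {B : Type*} [AddCommGroup B] [Lattice B]
  [CovariantClass B B (· + ·) (· ≤ ·)]

/-- Riesz decomposition in a lattice-ordered abelian group. -/
theorem riesz_decomp (a b z : B) (ha : 0 ≤ a) (hb : 0 ≤ b) (hz0 : 0 ≤ z)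
    (hzab : z ≤ a + b) :
    ∃ z₁ z₂ : B, 0 ≤ z₁ ∧ z₁ ≤ a ∧ 0 ≤ z₂ ∧ z₂ ≤ b ∧ z = z₁ + z₂ := by
  refine ⟨z ⊓ a, z - z ⊓ a, le_inf hz0 ha, inf_le_right, ?_, ?_, by abel⟩
  · exact sub_nonneg.2 inf_le_left
  · have h : z - z ⊓ a = 0 ⊔ (z - a) := by
      rw [sub_eq_add_neg, neg_inf, add_sup, add_neg_cancel, sub_eq_add_neg]
    rw [h]
    exact sup_le hb (sub_le_iff_le_add'.2 hzab)

end Aux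

set_option maxHeartbeats 1000000 in
theorem abstract_lewy_stampacchia_upper
    {B : Type*} [AddCommGroup B] [Module ℝ B] [Lattice B]
    [TopologicalSpace B] [IsTopologicalAddGroup B] [ContinuousSMul ℝ B]
    [T2Space B] [LocallyConvexSpace ℝ B]
    [CovariantClass B B (· + ·) (· ≤ ·)]
    (hsmul : ∀ (c : ℝ) (x : B), 0 ≤ c → 0 ≤ x → 0 ≤ c • x)
    (E : B → EReal) (hbot : ∀ x, E x ≠ ⊥)
    (hconv : ∀ (x y : B) (t : ℝ), 0 ≤ t → t ≤ 1 →
      E (t • x + (1 - t) • y) ≤ (t : EReal) * E x + ((1 - t) : EReal) * E y)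
    (hsub : ∀ x y : B, E (x ⊓ y) + E (x ⊔ y) ≤ E x + E y)
    (φ ψ : B) (hφψ : φ ≤ ψ)
    (ubar : B) (hubar : φ ≤ ubar ∧ ubar ≤ ψ ∧ ∀ u : B, φ ≤ u → u ≤ ψ → E ubar ≤ E u)
    (hcont : ∃ u : B, φ ≤ u ∧ u ≤ ψ ∧ E u ≠ ⊤ ∧ ContinuousAt E u)
    (ws : B →L[ℝ] ℝ) (hws : ws ∈ ESubdiff E ψ) (hwsd : IsPosDiff ws) :
    ∃ xs : B →L[ℝ] ℝ, xs ∈ ESubdiff E ubar ∧ IsPosDiff xs ∧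
      ∀ v : B, 0 ≤ v → sInf {r : ℝ | ∃ z : B, 0 ≤ z ∧ z ≤ v ∧ ws z = r} ≤ xs v := by
  obtain ⟨hφu, huψ, hmin⟩ := hubar
  obtain ⟨u, hu1, hu2, hufin, hucont⟩ := hcont
  obtain ⟨w₁, w₂, hw₁, hw₂, hw12⟩ := hwsd
  have hψtop : E ψ ≠ ⊤ := hws.1
  have hwsub : ∀ z : B, ((ws (z - ψ) : ℝ) : EReal) + E ψ ≤ E z := hws.2
  -- scalar multiplication is monotone
  have hsmul_le : ∀ t : ℝ, 0 ≤ t → ∀ a b : B, a ≤ b → t • a ≤ t • b := by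
    intro t ht a b hab
    have h := hsmul t (b - a) ht (sub_nonneg.2 hab)
    rw [smul_sub] at h
    exact sub_nonneg.1 h
  -- E ubar is a real number
  have hEubar_top : E ubar ≠ ⊤ := by
    intro h
    have := hmin u hu1 hu2
    rw [h, top_le_iff] at this
    exact hufin this
  set rb : ℝ := (E ubar).toReal with hrb
  have hEubar : E ubar = (rb : EReal) := (EReal.coe_toReal hEubar_top (hbot _)).symm
  set ru : ℝ := (E u).toReal with hru
  have hEu : E u = (ru : EReal) := (EReal.coe_toReal hufin (hbot _)).symm
  -- lower bound on ws along order intervals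
  have hws_lb : ∀ v z : B, 0 ≤ z → z ≤ v → -(w₂ v) ≤ ws z := by
    intro v z hz0 hzv
    have h1 : 0 ≤ w₁ z := hw₁ z hz0
    have h2 : w₂ z ≤ w₂ v := by
      have := hw₂ (v - z) (sub_nonneg.2 hzv)
      rw [map_sub] at this
      linarith
    have : ws z = w₁ z - w₂ z := by rw [hw12]; rfl
    linarith [this]
  -- the key submodularity estimate
  have hkey : ∀ w : B, φ ≤ w →
      E ubar + ((ws ((w ⊔ ψ) - ψ) : ℝ) : EReal) ≤ E w := by
    intro w hw
    by_cases hEw : E w = ⊤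
    · rw [hEw]; exact le_top
    have h1 := hwsub (w ⊔ ψ)
    have h2 := hsub w ψ
    have h3 : E ubar ≤ E (w ⊓ ψ) := hmin _ (le_inf hw hφψ) inf_le_right
    set rψ : ℝ := (E ψ).toReal with hrψ
    have hEψ : E ψ = (rψ : EReal) := (EReal.coe_toReal hψtop (hbot _)).symm
    set rw' : ℝ := (E w).toReal with hrw'
    have hEw' : E w = (rw' : EReal) := (EReal.coe_toReal hEw (hbot _)).symm
    -- E (w ⊔ ψ) is finite
    have hsup_top : E (w ⊔ ψ) ≠ ⊤ := by
      intro htop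
      rw [htop, EReal.add_top_of_ne_bot (hbot _), hEw', hEψ, ← EReal.coe_add,
        top_le_iff] at h2
      exact EReal.coe_ne_top _ h2
    have hinf_top : E (w ⊓ ψ) ≠ ⊤ := by
      intro htop
      rw [htop, EReal.top_add_of_ne_bot (hbot _), hEw', hEψ, ← EReal.coe_add,
        top_le_iff] at h2
      exact EReal.coe_ne_top _ h2
    set ri : ℝ := (E (w ⊓ ψ)).toReal with hri
    have hEi : E (w ⊓ ψ) = (ri : EReal) := (EReal.coe_toReal hinf_top (hbot _)).symm
    set rs : ℝ := (E (w ⊔ ψ)).toReal with hrs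
    have hEs : E (w ⊔ ψ) = (rs : EReal) := (EReal.coe_toReal hsup_top (hbot _)).symm
    rw [hEψ, hEs] at h1
    rw [hEi, hEs, hEw', hEψ] at h2
    rw [hEubar, hEi] at h3
    have h1' : ws ((w ⊔ ψ) - ψ) + rψ ≤ rs := by exact_mod_cast h1
    have h2' : ri + rs ≤ rw' + rψ := by exact_mod_cast h2
    have h3' : rb ≤ ri := by exact_mod_cast h3
    rw [hEubar, hEw']
    have : rb + ws ((w ⊔ ψ) - ψ) ≤ rw' := by linarith
    exact_mod_cast this
  -- The epigraph of the shifted energy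
  set epi : Set (B × ℝ) := {q | E (ubar + q.1) ≤ (q.2 : EReal) + E ubar} with hepi
  have hepi_mem : ∀ q : B × ℝ, q ∈ epi ↔ E (ubar + q.1) ≤ ((q.2 + rb : ℝ) : EReal) := by
    intro q
    rw [hepi]; simp only [Set.mem_setOf_eq, hEubar, ← EReal.coe_add]
  have hepi_conv : Convex ℝ epi := by
    intro p hp q hq a b ha hb hab
    rw [hepi_mem] at hp hq ⊢
    have hp_top : E (ubar + p.1) ≠ ⊤ := fun h => by
      rw [h, top_le_iff] at hp; exact EReal.coe_ne_top _ hp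
    have hq_top : E (ubar + q.1) ≠ ⊤ := fun h => by
      rw [h, top_le_iff] at hq; exact EReal.coe_ne_top _ hq
    set α : ℝ := (E (ubar + p.1)).toReal with hα
    have hEα : E (ubar + p.1) = (α : EReal) := (EReal.coe_toReal hp_top (hbot _)).symm
    set β : ℝ := (E (ubar + q.1)).toReal with hβ
    have hEβ : E (ubar + q.1) = (β : EReal) := (EReal.coe_toReal hq_top (hbot _)).symm
    have hα' : α ≤ p.2 + rb := by rw [hEα] at hp; exact_mod_cast hp
    have hβ' : β ≤ q.2 + rb := by rw [hEβ] at hq; exact_mod_cast hq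
    have hb' : b = 1 - a := by linarith
    have hcomb : ubar + (a • p + b • q).1 = a • (ubar + p.1) + (1 - a) • (ubar + q.1) := by
      rw [hb']
      show ubar + (a • p.1 + (1 - a) • q.1) =
        a • (ubar + p.1) + (1 - a) • (ubar + q.1)
      rw [smul_add, smul_add]
      have : a • ubar + (1 - a) • ubar = ubar := by
        rw [← add_smul]; simp
      rw [show a • ubar + a • p.1 + ((1 - a) • ubar + (1 - a) • q.1)
          = (a • ubar + (1 - a) • ubar) + (a • p.1 + (1 - a) • q.1) by abel, this]
    have hc := hconv (ubar + p.1) (ubar + q.1) a ha (by linarith)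
    rw [hEα, hEβ] at hc
    have hone : (1 : EReal) - (a : EReal) = ((1 - a : ℝ) : EReal) := by norm_cast
    rw [hone, ← EReal.coe_mul, ← EReal.coe_mul, ← EReal.coe_add] at hc
    rw [hcomb]
    refine le_trans hc ?_
    have h2 : (a • p + b • q).2 = a * p.2 + b * q.2 := rfl
    rw [h2]
    have hmul1 : a * α ≤ a * (p.2 + rb) := mul_le_mul_of_nonneg_left hα' ha
    have hmul2 : (1 - a) * β ≤ (1 - a) * (q.2 + rb) := by
      apply mul_le_mul_of_nonneg_left hβ' (by linarith)
    apply EReal.coe_le_coe_iff.2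
    rw [hb']
    nlinarith
  -- the hypograph of the Riesz-Kantorovich minorant
  set hypo : Set (B × ℝ) :=
    {q | φ - ubar ≤ q.1 ∧ ∀ z : B, 0 ≤ z → z ≤ q.1 ⊔ 0 → q.2 ≤ ws z} with hhypo
  have hhypo_conv : Convex ℝ hypo := by
    intro p hp q hq a b ha hb hab
    rcases eq_or_lt_of_le ha with rfl | ha0
    · have : b = 1 := by linarith
      subst this
      simpa using hq
    rcases eq_or_lt_of_le hb with rfl | hb0
    · have : a = 1 := by linarith
      subst this
      simpa using hp
    constructor
    · have h1 : a • (φ - ubar) ≤ a • p.1 := hsmul_le a ha _ _ hp.1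
      have h2 : b • (φ - ubar) ≤ b • q.1 := hsmul_le b hb _ _ hq.1
      have h3 : a • (φ - ubar) + b • (φ - ubar) = φ - ubar := by
        rw [← add_smul, hab, one_smul]
      calc φ - ubar = a • (φ - ubar) + b • (φ - ubar) := h3.symm
        _ ≤ a • p.1 + b • q.1 := add_le_add h1 h2
        _ = (a • p + b • q).1 := rfl
    · intro z hz0 hzle
      have hsup : (a • p + b • q).1 ⊔ 0 ≤ a • (p.1 ⊔ 0) + b • (q.1 ⊔ 0) := by
        apply sup_le
        · exact add_le_add (hsmul_le a ha _ _ le_sup_left) (hsmul_le b hb _ _ le_sup_left)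
        · exact add_nonneg (hsmul a _ ha le_sup_right) (hsmul b _ hb le_sup_right)
      obtain ⟨z₁, z₂, hz₁0, hz₁le, hz₂0, hz₂le, hzeq⟩ :=
        riesz_decomp (a • (p.1 ⊔ 0)) (b • (q.1 ⊔ 0)) z
          (hsmul a _ ha le_sup_right) (hsmul b _ hb le_sup_right) hz0
          (le_trans hzle hsup)
      have key : ∀ (t : ℝ), 0 < t → ∀ (x : B) (zz : B) (s : ℝ),
          (∀ y : B, 0 ≤ y → y ≤ x → s ≤ ws y) → 0 ≤ zz → zz ≤ t • x →
          t * s ≤ ws zz := by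
        intro t ht x zz s hs hzz0 hzzle
        have hy0 : 0 ≤ t⁻¹ • zz := hsmul t⁻¹ _ (inv_nonneg.2 ht.le) hzz0
        have hy1 : t⁻¹ • zz ≤ x := by
          have := hsmul_le t⁻¹ (inv_nonneg.2 ht.le) _ _ hzzle
          rwa [smul_smul, inv_mul_cancel₀ ht.ne', one_smul] at this
        have h := hs _ hy0 hy1
        have h2 : ws (t⁻¹ • zz) = t⁻¹ * ws zz := by
          rw [map_smul]; rfl
        rw [h2] at h
        have := mul_le_mul_of_nonneg_left h ht.le
        rwa [mul_inv_cancel_left₀ ht.ne'] at this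
      have k1 : a * p.2 ≤ ws z₁ := key a ha0 (p.1 ⊔ 0) z₁ p.2 (fun y h1 h2 => hp.2 y h1 h2) hz₁0 hz₁le
      have k2 : b * q.2 ≤ ws z₂ := key b hb0 (q.1 ⊔ 0) z₂ q.2 (fun y h1 h2 => hq.2 y h1 h2) hz₂0 hz₂le
      have : ws z = ws z₁ + ws z₂ := by rw [hzeq, map_add]
      show a * p.2 + b * q.2 ≤ ws z
      rw [this]
      exact add_le_add k1 k2
  -- an explicit interior point of the epigraph
  have hIio : {y : EReal | y < ((ru + 1 : ℝ) : EReal)} ∈ nhds (E u) := by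
    apply isOpen_Iio.mem_nhds
    rw [hEu]
    simp only [Set.mem_Iio]
    exact_mod_cast (by linarith : ru < ru + 1)
  obtain ⟨V, hVsub, hVopen, hVu⟩ := mem_nhds_iff.1 (hucont.preimage_mem_nhds hIio)
  set a₀ : B × ℝ := (u - ubar, ru + 2 - rb) with ha₀def
  have ha₀ : a₀ ∈ interior epi := by
    have hWopen : IsOpen (((fun h : B => ubar + h) ⁻¹' V) ×ˢ Set.Ioi (ru + 1 - rb)) :=
      ((hVopen.preimage (continuous_const.add continuous_id)).prod isOpen_Ioi)
    have hWsub : (((fun h : B => ubar + h) ⁻¹' V) ×ˢ Set.Ioi (ru + 1 - rb)) ⊆ epi := by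
      rintro ⟨h, s⟩ ⟨hh, hs⟩
      rw [hepi_mem]
      have h1 : E (ubar + h) < ((ru + 1 : ℝ) : EReal) := hVsub hh
      refine le_trans h1.le ?_
      apply EReal.coe_le_coe_iff.2
      simp only [Set.mem_Ioi] at hs
      linarith
    apply interior_maximal hWsub hWopen
    constructor
    · show ubar + (u - ubar) ∈ V
      rwa [show ubar + (u - ubar) = u by abel]
    · show ru + 2 - rb ∈ Set.Ioi (ru + 1 - rb)
      simp only [Set.mem_Ioi]; linarith
  -- disjointness of interior of epigraph and hypograph
  have hdisj : Disjoint (interior epi) hypo := by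
    rw [Set.disjoint_left]
    intro p hpint hphypo
    -- find ε > 0 with (p.1, p.2 - ε) ∈ epi
    have hc : Continuous fun t : ℝ => (p.1, p.2 - t) :=
      continuous_const.prodMk (continuous_const.sub continuous_id)
    have hmem : ∀ᶠ t in nhds (0 : ℝ), (p.1, p.2 - t) ∈ interior epi := by
      apply hc.continuousAt.preimage_mem_nhds
      apply isOpen_interior.mem_nhds
      simpa using hpint
    obtain ⟨δ, hδ, hball⟩ := Metric.eventually_nhds_iff.1 hmem
    have hεmem : (p.1, p.2 - δ/2) ∈ epi :=
      interior_subset (hball (by simp [abs_of_pos, hδ, half_lt_self] : dist (δ/2) 0 < δ))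
    -- the key estimate contradicts it
    set z' : B := ((ubar + p.1) ⊔ ψ) - ψ with hz'
    have hz'0 : 0 ≤ z' := sub_nonneg.2 le_sup_right
    have hz'le : z' ≤ p.1 ⊔ 0 := by
      rw [hz', sub_le_iff_le_add]
      apply sup_le
      · calc ubar + p.1 = p.1 + ubar := add_comm _ _
          _ ≤ (p.1 ⊔ 0) + ψ := add_le_add le_sup_left huψ
      · exact le_add_of_nonneg_left le_sup_right
    have hφw : φ ≤ ubar + p.1 := by
      have := hphypo.1
      rwa [sub_le_iff_le_add, add_comm] at this
    have h1 : E ubar + ((ws z' : ℝ) : EReal) ≤ E (ubar + p.1) := hkey _ hφw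
    have h2 : p.2 ≤ ws z' := hphypo.2 z' hz'0 hz'le
    rw [hepi_mem] at hεmem
    have h3 : E (ubar + p.1) ≤ ((p.2 - δ/2 + rb : ℝ) : EReal) := hεmem
    rw [hEubar] at h1
    have h4 : ((rb + ws z' : ℝ) : EReal) ≤ ((p.2 - δ/2 + rb : ℝ) : EReal) := by
      refine le_trans ?_ (le_trans h1 h3)
      rw [EReal.coe_add]
    have h5 : rb + ws z' ≤ p.2 - δ/2 + rb := EReal.coe_le_coe_iff.1 h4
    linarith
  -- separation
  obtain ⟨f, u₀, hfA, hfC⟩ :=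
    geometric_hahn_banach_open (hepi_conv.interior) isOpen_interior hhypo_conv hdisj
  set g : B →L[ℝ] ℝ := f.comp (ContinuousLinearMap.inl ℝ B ℝ) with hg
  set c : ℝ := f (0, 1) with hcdef
  have hf_eq : ∀ (h : B) (s : ℝ), f (h, s) = g h + s * c := by
    intro h s
    have : (h, s) = (h, (0 : ℝ)) + s • ((0 : B), (1 : ℝ)) := by
      simp [Prod.ext_iff]
    rw [this, map_add, map_smul, smul_eq_mul]
    rfl
  -- everything in epi satisfies f ≤ u₀
  have hA : ∀ p ∈ epi, f p ≤ u₀ := by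
    intro p hp
    by_contra hcon
    push_neg at hcon
    set D : ℝ := f p - u₀ with hD
    have hD0 : 0 < D := by simp [hD]; linarith
    set M : ℝ := |f a₀ - f p| with hM
    have hM0 : 0 ≤ M := abs_nonneg _
    set t : ℝ := min 1 (D / (2 * (M + 1))) with ht
    have ht0 : 0 < t := lt_min one_pos (by positivity)
    have ht1 : t ≤ 1 := min_le_left _ _
    have htD : t ≤ D / (2 * (M + 1)) := min_le_right _ _
    have htM : t * (M + 1) ≤ D / 2 := by
      have := (le_div_iff₀ (by positivity : (0:ℝ) < 2 * (M+1))).1 htD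
      nlinarith
    have hmem : t • a₀ + (1 - t) • p ∈ interior epi :=
      hepi_conv.combo_interior_closure_mem_interior ha₀ (subset_closure hp) ht0
        (by linarith) (by ring)
    have hval := hfA _ hmem
    rw [map_add, map_smul, map_smul, smul_eq_mul, smul_eq_mul] at hval
    have hfa : -M ≤ f a₀ - f p := neg_abs_le _
    nlinarith [mul_le_mul_of_nonneg_left hfa ht0.le]
  -- u₀ = 0 and c < 0
  have h00 : ((0 : B), (0 : ℝ)) ∈ hypo := by
    constructor
    · exact sub_nonpos.2 hφu
    · intro z hz0 hzle
      have : z = 0 := le_antisymm (by simpa using hzle) hz0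
      simp [this]
  have hu₀_le : u₀ ≤ 0 := by
    have := hfC _ h00
    rwa [hf_eq, map_zero, zero_mul, add_zero] at this
  have hepi0 : ∀ t : ℝ, 0 ≤ t → ((0 : B), t) ∈ epi := by
    intro t ht
    rw [hepi_mem]
    rw [add_zero, hEubar]
    exact EReal.coe_le_coe_iff.2 (by linarith)
  have htc : ∀ t : ℝ, 0 ≤ t → t * c ≤ u₀ := by
    intro t ht
    have := hA _ (hepi0 t ht)
    rwa [hf_eq, map_zero, zero_add] at this
  have hu₀_ge : 0 ≤ u₀ := by simpa using htc 0 le_rfl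
  have hu₀ : u₀ = 0 := le_antisymm hu₀_le hu₀_ge
  have hc_le : c ≤ 0 := by
    by_contra hcon
    push_neg at hcon
    have := htc (1 / c) (by positivity)
    rw [one_div, inv_mul_cancel₀ hcon.ne', hu₀] at this
    linarith
  set h₀ : B := u - ubar with hh₀
  have hhypo_pt : (h₀, -(w₂ (h₀ ⊔ 0))) ∈ hypo := by
    constructor
    · exact sub_le_sub_right hu1 ubar
    · intro z hz0 hzle
      exact hws_lb (h₀ ⊔ 0) z hz0 hzle
  have hc_ne : c ≠ 0 := by
    intro hc0
    have h1 := hfA _ ha₀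
    have h2 := hfC _ hhypo_pt
    rw [hf_eq, hc0, mul_zero, add_zero] at h1
    rw [hf_eq, hc0, mul_zero, add_zero] at h2
    rw [hu₀] at h1 h2
    show False
    have : f.comp (ContinuousLinearMap.inl ℝ B ℝ) (u - ubar) = g h₀ := rfl
    linarith [h1, h2]
  have hc_lt : c < 0 := lt_of_le_of_ne hc_le hc_ne
  have hcpos : 0 < -c := by linarith
  -- the functional
  set xs : B →L[ℝ] ℝ := (-c)⁻¹ • g with hxs
  have hxs_apply : ∀ h : B, xs h = (-c)⁻¹ * g h := fun h => rfl
  -- from epi: xs is a subgradient bound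
  have hsubgrad : ∀ (h : B) (s : ℝ), (h, s) ∈ epi → xs h ≤ s := by
    intro h s hmem
    have := hA _ hmem
    rw [hf_eq, hu₀] at this
    have h1 : g h ≤ s * (-c) := by linarith
    have h2 := mul_le_mul_of_nonneg_left h1 (inv_nonneg.2 hcpos.le)
    rw [hxs_apply]
    rwa [mul_comm s, inv_mul_cancel_left₀ hcpos.ne'] at h2
  -- from hypo: xs dominates
  have hdom : ∀ (h : B) (s : ℝ), (h, s) ∈ hypo → s ≤ xs h := by
    intro h s hmem
    have := hfC _ hmem
    rw [hf_eq, hu₀] at this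
    have h1 : s * (-c) ≤ g h := by linarith
    have h2 := mul_le_mul_of_nonneg_left h1 (inv_nonneg.2 hcpos.le)
    rw [hxs_apply]
    rwa [mul_comm s, inv_mul_cancel_left₀ hcpos.ne'] at h2
  -- the sInf bound
  have hge : ∀ v : B, 0 ≤ v →
      sInf {r : ℝ | ∃ z : B, 0 ≤ z ∧ z ≤ v ∧ ws z = r} ≤ xs v := by
    intro v hv
    set S : Set ℝ := {r : ℝ | ∃ z : B, 0 ≤ z ∧ z ≤ v ∧ ws z = r} with hS
    have hSne : S.Nonempty := ⟨0, 0, le_rfl, hv, map_zero ws⟩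
    have hSbdd : BddBelow S := by
      refine ⟨-(w₂ v), ?_⟩
      rintro r ⟨z, h1, h2, rfl⟩
      exact hws_lb v z h1 h2
    apply hdom
    constructor
    · exact le_trans (sub_nonpos.2 hφu) hv
    · intro z hz0 hzle
      rw [sup_eq_left.2 hv] at hzle
      exact csInf_le hSbdd ⟨z, hz0, hzle, rfl⟩
  refine ⟨xs, ⟨hEubar_top, ?_⟩, ?_, hge⟩
  · -- subdifferential property
    intro z
    by_cases hEz : E z = ⊤
    · rw [hEz]; exact le_top
    set rz : ℝ := (E z).toReal with hrz
    have hEz' : E z = (rz : EReal) := (EReal.coe_toReal hEz (hbot _)).symm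
    have hmem : (z - ubar, rz - rb) ∈ epi := by
      rw [hepi_mem]
      show E (ubar + (z - ubar)) ≤ ((rz - rb + rb : ℝ) : EReal)
      rw [show ubar + (z - ubar) = z by abel, hEz']
      exact EReal.coe_le_coe_iff.2 (by linarith)
    have := hsubgrad _ _ hmem
    rw [hEubar, hEz', ← EReal.coe_add]
    exact EReal.coe_le_coe_iff.2 (by linarith)
  · -- IsPosDiff
    refine ⟨xs + w₂, w₂, ?_, hw₂, by abel⟩
    intro v hv
    have h1 := hge v hv
    have hSne : ({r : ℝ | ∃ z : B, 0 ≤ z ∧ z ≤ v ∧ ws z = r} : Set ℝ).Nonempty :=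
      ⟨0, 0, le_rfl, hv, map_zero ws⟩
    have h2 : -(w₂ v) ≤ sInf {r : ℝ | ∃ z : B, 0 ≤ z ∧ z ≤ v ∧ ws z = r} := by
      apply le_csInf hSne
      rintro r ⟨z, h1', h2', rfl⟩
      exact hws_lb v z h1' h2'
    have : (xs + w₂) v = xs v + w₂ v := rfl
    rw [this]
    linarith
end

section
/- Key step of the Lewy–Stampacchia proof: Let B be a topological vector lattice, E : B → ℝ ∪ {+∞} convex and submodular, φ ∈ B, w* ∈ ∂E(φ), and let λ ∈ B* satisfy λ ≥ w* ⊔ 0 on the positive cone (in particular λ(z) ≥ ⟨w*, z⟩ and λ(z) ≥ 0 for z ≻ 0). Then for every u ≺ ū (any ū with φ ≺ ū) it holds E(u ⊔ φ) − λ(u ⊔ φ) ≤ E(u) − λ(u). -/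
theorem lewy_stampacchia_key_step
    {B : Type*} [AddCommGroup B] [Module ℝ B] [Lattice B]
    [TopologicalSpace B] [IsTopologicalAddGroup B] [ContinuousSMul ℝ B]
    [T2Space B] [LocallyConvexSpace ℝ B]
    [CovariantClass B B (· + ·) (· ≤ ·)]
    (hsmul : ∀ (c : ℝ) (x : B), 0 ≤ c → 0 ≤ x → 0 ≤ c • x)
    (E : B → EReal) (hbot : ∀ x, E x ≠ ⊥)
    (hconv : ∀ (x y : B) (t : ℝ), 0 ≤ t → t ≤ 1 →
      E (t • x + (1 - t) • y) ≤ (t : EReal) * E x + ((1 - t) : EReal) * E y)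
    (hsub : ∀ x y : B, E (x ⊓ y) + E (x ⊔ y) ≤ E x + E y)
    (φ : B) (ws : B →L[ℝ] ℝ) (hws : ws ∈ ESubdiff E φ)
    (lam : B →L[ℝ] ℝ) (hlam : ∀ z : B, 0 ≤ z → ws z ≤ lam z ∧ 0 ≤ lam z)
    (ubar u : B) (hφu : φ ≤ ubar) (hu : u ≤ ubar) :
    E (u ⊔ φ) - ((lam (u ⊔ φ) : ℝ) : EReal) ≤ E u - ((lam u : ℝ) : EReal) := by
  obtain ⟨hφtop, hsubd⟩ := hws
  obtain ⟨p, hp⟩ : ∃ p : ℝ, E φ = (p : EReal) := by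
    lift E φ to ℝ using ⟨hφtop, hbot φ⟩ with p
    exact ⟨p, rfl⟩
  have h1 := hsubd (u ⊓ φ)
  rw [hp] at h1
  -- the key identity: u ⊓ φ - φ = u - u ⊔ φ
  have hid : u ⊓ φ - φ = u - u ⊔ φ := by
    rw [sub_eq_sub_iff_add_eq_add]
    exact inf_add_sup u φ
  have h3 : ((ws (u ⊓ φ - φ) : ℝ) : EReal) + E (u ⊔ φ) + (p : EReal) ≤ E u + (p : EReal) := by
    calc ((ws (u ⊓ φ - φ) : ℝ) : EReal) + E (u ⊔ φ) + (p : EReal)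
        = ((ws (u ⊓ φ - φ) : ℝ) : EReal) + (p : EReal) + E (u ⊔ φ) := by
          rw [add_right_comm]
      _ ≤ E (u ⊓ φ) + E (u ⊔ φ) := add_le_add_left h1 _
      _ ≤ E u + E φ := hsub u φ
      _ = E u + (p : EReal) := by rw [hp]
  have h4 : ((ws (u ⊓ φ - φ) : ℝ) : EReal) + E (u ⊔ φ) ≤ E u :=
    (EReal.addLECancellable_coe p).add_le_add_iff_right.1 h3
  -- replace ws by lam
  have hpos : (0 : B) ≤ u ⊔ φ - u := sub_nonneg.2 le_sup_left
  have hwl : ws (u ⊔ φ - u) ≤ lam (u ⊔ φ - u) := (hlam _ hpos).1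
  have h5 : ((lam u - lam (u ⊔ φ) : ℝ) : EReal) + E (u ⊔ φ) ≤ E u := by
    refine le_trans (add_le_add_left (EReal.coe_le_coe_iff.2 ?_) _) h4
    rw [hid]
    have : ws (u - u ⊔ φ) = -(ws (u ⊔ φ - u)) := by rw [← map_neg, neg_sub]
    rw [this]
    simp only [map_sub] at hwl ⊢
    linarith
  -- rearrange
  rw [EReal.sub_le_iff_le_add (by left; exact EReal.coe_ne_bot _)
    (by left; exact EReal.coe_ne_top _)]
  have h6 : E (u ⊔ φ) ≤ E u - ((lam u - lam (u ⊔ φ) : ℝ) : EReal) :=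
    (EReal.le_sub_iff_add_le (by left; exact EReal.coe_ne_bot _)
      (by left; exact EReal.coe_ne_top _)).2 (by rwa [add_comm] at h5)
  calc E (u ⊔ φ) ≤ E u - ((lam u - lam (u ⊔ φ) : ℝ) : EReal) := h6
    _ = E u - ((lam u : ℝ) : EReal) + ((lam (u ⊔ φ) : ℝ) : EReal) := by
        rw [sub_eq_add_neg, ← EReal.coe_neg,
          show (-(lam u - lam (u ⊔ φ)) : ℝ) = -lam u + lam (u ⊔ φ) from by ring,
          EReal.coe_add, ← add_assoc, EReal.coe_neg, ← sub_eq_add_neg]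
end
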